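/- The map I: (z,t) ↦ (−2z/(|z|² + t̄), 4t̄/(|z|⁴ + |t|²)) on the Heisenberg group ℍ × Im ℍ minus the origin is an involution: I(I(z,t)) = (z,t) for all (z,t) ≠ (0,0). -/

import Mathlib

open Quaternion

/-- The inversion `I(z,t) = (−2(|z|² + t̄)⁻¹ z, 4 t̄ (|z|⁴ + |t|²)⁻¹)` on the
Heisenberg group `ℍ × Im ℍ` minus the origin. -/
noncomputable def Imap (p : ℍ[ℝ] × ℍ[ℝ]) : ℍ[ℝ] × ℍ[ℝ] :=
  (-2 * (((Quaternion.normSq p.1 : ℝ) : ℍ[ℝ]) + star p.2)⁻¹ * p.1,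
   4 * star p.2 * (((Quaternion.normSq p.1 ^ 2 + Quaternion.normSq p.2 : ℝ) : ℍ[ℝ]))⁻¹)

/-- The map `I : (z,t) ↦ (−2z/(|z|² + t̄), 4t̄/(|z|⁴ + |t|²))` is an involution on
the Heisenberg group minus the origin: `I(I(z,t)) = (z,t)` whenever `t` is purely
imaginary and `(z,t) ≠ (0,0)`. -/
theorem Imap_involutive (z t : ℍ[ℝ]) (ht : star t = -t) (h : ¬(z = 0 ∧ t = 0)) :
    Imap (Imap (z, t)) = (z, t) := by
  set n := normSq z with hn
  set m := normSq t with hm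
  set c := n ^ 2 + m with hcdef
  have hn0 : (0:ℝ) ≤ n := normSq_nonneg
  have hm0 : (0:ℝ) ≤ m := normSq_nonneg
  have hc : c ≠ 0 := by
    intro hc0
    apply h
    have h1 : n ^ 2 = 0 := by nlinarith [sq_nonneg n]
    have h2 : m = 0 := by nlinarith [sq_nonneg n]
    refine ⟨normSq_eq_zero.1 ?_, normSq_eq_zero.1 h2⟩
    rw [← hn]
    exact pow_eq_zero_iff (n := 2) (by norm_num) |>.1 h1
  have htt : t * t = -(m : ℍ[ℝ]) := by
    have h1 := self_mul_star t
    rw [ht, mul_neg] at h1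
    exact neg_eq_iff_eq_neg.1 h1
  have hcm : (n:ℍ[ℝ]) * t = t * (n:ℍ[ℝ]) := coe_commutes n t
  have hAB : ((n:ℍ[ℝ]) - t) * ((n:ℍ[ℝ]) + t) = ((c : ℝ) : ℍ[ℝ]) := by
    calc ((n:ℍ[ℝ]) - t) * ((n:ℍ[ℝ]) + t)
        = (n:ℍ[ℝ]) * (n:ℍ[ℝ]) - t * t + ((n:ℍ[ℝ]) * t - t * (n:ℍ[ℝ])) := by noncomm_ring
      _ = ((c : ℝ) : ℍ[ℝ]) := by
        rw [hcm, sub_self, add_zero, htt, sub_neg_eq_add, ← coe_mul, ← coe_add, hcdef, sq]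
  have hBA : ((n:ℍ[ℝ]) + t) * ((n:ℍ[ℝ]) - t) = ((c : ℝ) : ℍ[ℝ]) := by
    calc ((n:ℍ[ℝ]) + t) * ((n:ℍ[ℝ]) - t)
        = (n:ℍ[ℝ]) * (n:ℍ[ℝ]) - t * t + (t * (n:ℍ[ℝ]) - (n:ℍ[ℝ]) * t) := by noncomm_ring
      _ = ((c : ℝ) : ℍ[ℝ]) := by
        rw [hcm, sub_self, add_zero, htt, sub_neg_eq_add, ← coe_mul, ← coe_add, hcdef, sq]
  have hAinv : ((n:ℍ[ℝ]) - t)⁻¹ = ((c⁻¹ : ℝ) : ℍ[ℝ]) * ((n:ℍ[ℝ]) + t) := by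
    refine inv_eq_of_mul_eq_one_right ?_
    rw [coe_commutes, ← mul_assoc, hAB, ← coe_mul, mul_inv_cancel₀ hc, coe_one]
  have hBinv : ((n:ℍ[ℝ]) + t)⁻¹ = ((c⁻¹ : ℝ) : ℍ[ℝ]) * ((n:ℍ[ℝ]) - t) := by
    refine inv_eq_of_mul_eq_one_right ?_
    rw [coe_commutes, ← mul_assoc, hBA, ← coe_mul, mul_inv_cancel₀ hc, coe_one]
  have hnsB : normSq ((n:ℍ[ℝ]) + t) = c := by
    have h1 := self_mul_star ((n:ℍ[ℝ]) + t)
    rw [star_add, star_coe, ht, ← sub_eq_add_neg, hBA] at h1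
    exact coe_injective h1.symm
  -- first application of Imap
  have e1 : Imap (z, t) = (((-2*c⁻¹ : ℝ) : ℍ[ℝ]) * (((n:ℍ[ℝ]) + t) * z),
      ((-4*c⁻¹ : ℝ) : ℍ[ℝ]) * t) := by
    simp only [Imap, ht, ← hn, ← hm, ← hcdef]
    rw [Prod.mk.injEq]
    constructor
    · rw [← sub_eq_add_neg, hAinv]
      have h2 : (-2 : ℍ[ℝ]) = ((-2 : ℝ) : ℍ[ℝ]) := by norm_cast
      rw [h2, ← mul_assoc, ← coe_mul, mul_assoc]
    · rw [← coe_inv]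
      have h4 : (4 : ℍ[ℝ]) = ((4 : ℝ) : ℍ[ℝ]) := by norm_cast
      rw [h4, mul_neg, neg_mul, mul_assoc, ← coe_commutes, ← mul_assoc, ← coe_mul,
        ← neg_mul, ← coe_neg]
      norm_num
  -- norms of the image
  have hns1 : normSq (((-2*c⁻¹ : ℝ) : ℍ[ℝ]) * (((n:ℍ[ℝ]) + t) * z)) = 4 * c⁻¹ ^ 2 * c * n := by
    rw [map_mul, map_mul, normSq_coe, hnsB, ← hn]
    ring
  have hns2 : normSq (((-4*c⁻¹ : ℝ) : ℍ[ℝ]) * t) = 16 * c⁻¹ ^ 2 * m := by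
    rw [map_mul, normSq_coe, ← hm]
    ring
  rw [e1, Imap]
  have hsc : c⁻¹ * c = 1 := inv_mul_cancel₀ hc
  have hstar2 : star (((-4*c⁻¹ : ℝ) : ℍ[ℝ]) * t) = ((4*c⁻¹ : ℝ) : ℍ[ℝ]) * t := by
    rw [star_mul, star_coe, ht, ← coe_commutes, mul_neg, ← neg_mul, ← coe_neg]
    norm_num
  simp only [hns1, hns2, hstar2]
  rw [Prod.mk.injEq]
  constructor
  · -- first component
    have hkey : ((4 * c⁻¹ ^ 2 * c * n : ℝ) : ℍ[ℝ]) + ((4*c⁻¹ : ℝ) : ℍ[ℝ]) * t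
        = ((4*c⁻¹ : ℝ) : ℍ[ℝ]) * ((n:ℍ[ℝ]) + t) := by
      have hr : (4*c⁻¹^2*c*n : ℝ) = (4*c⁻¹) * n := by field_simp
      rw [hr, coe_mul, ← mul_add]
    rw [hkey, mul_inv_rev, hBinv, ← coe_inv]
    have h2 : (-2 : ℍ[ℝ]) = ((-2 : ℝ) : ℍ[ℝ]) := by norm_cast
    rw [h2]
    have hz : ∀ (r : ℝ), r = 1 → r • z = z := fun r hr => by rw [hr, one_smul]
    simp only [coe_mul_eq_smul, mul_coe_eq_smul, smul_mul_assoc, mul_smul_comm, smul_smul,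
      ← mul_assoc]
    rw [hAB, coe_mul_eq_smul, smul_smul]
    apply hz
    field_simp
    ring
  · -- second component
    have hkey2 : ((4 * c⁻¹ ^ 2 * c * n) ^ 2 + 16 * c⁻¹ ^ 2 * m : ℝ) = 16 * c⁻¹ := by
      field_simp
      ring
    rw [hkey2, ← coe_inv]
    have h4 : (4 : ℍ[ℝ]) = ((4 : ℝ) : ℍ[ℝ]) := by norm_cast
    rw [h4]
    have hz : ∀ (r : ℝ), r = 1 → r • t = t := fun r hr => by rw [hr, one_smul]
    simp only [coe_mul_eq_smul, mul_coe_eq_smul, smul_mul_assoc, mul_smul_comm, smul_smul]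
    apply hz
    field_simp
    norm_num
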